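/- Let p, s be real numbers with 0 < p < 1 and 0 < s < 1, and let t be a real number with 0 < t < 1. Then ∫₀^∞ y^{s−1} (1+y)^{−p} (t+y)^{p−1} dy = (π / sin(πs)) · ₂F₁(1−p, 1−s; 1; 1−t). -/

import Mathlib

set_option autoImplicit false

open MeasureTheory
open scoped Real

/-- Pochhammer symbol `(a)_n = a(a+1)⋯(a+n−1)` for a real number. -/
noncomputable def pochR (a : ℝ) (n : ℕ) : ℝ := ∏ k ∈ Finset.range n, (a + k)

/-- Gauss hypergeometric series `₂F₁(a,b;c;x)` (real). -/
noncomputable def hyp2F1 (a b c x : ℝ) : ℝ :=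
  ∑' n : ℕ, (pochR a n * pochR b n) / (pochR c n * (n.factorial : ℝ)) * x ^ n

lemma pochR_zero (a : ℝ) : pochR a 0 = 1 := by simp [pochR]

lemma pochR_succ (a : ℝ) (n : ℕ) : pochR a (n + 1) = pochR a n * (a + n) :=
  Finset.prod_range_succ _ _

lemma pochR_pos {a : ℝ} (ha : 0 < a) (n : ℕ) : 0 < pochR a n :=
  Finset.prod_pos fun k _ => by positivity

lemma pochR_one (n : ℕ) : pochR 1 n = n.factorial := by
  induction n with
  | zero => simp [pochR_zero]
  | succ n ih =>
    rw [pochR_succ, ih, Nat.factorial_succ]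
    push_cast; ring

lemma Gamma_pochR {c : ℝ} (hc : 0 < c) (n : ℕ) :
    Real.Gamma (c + n) = pochR c n * Real.Gamma c := by
  induction n with
  | zero => simp [pochR_zero]
  | succ n ih =>
    have h0 : (0:ℝ) < c + n := by positivity
    have h1 : c + ((n:ℕ) + 1 : ℕ) = (c + n) + 1 := by push_cast; ring
    rw [h1, Real.Gamma_add_one (ne_of_gt h0), ih, pochR_succ]; ring

lemma tendsto_abs_ratio (a : ℝ) :
    Filter.Tendsto (fun n : ℕ => |a + n| / ((n : ℝ) + 1)) Filter.atTop (nhds 1) := by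
  have h0 : Filter.Tendsto (fun n : ℕ => (a - 1) / ((n : ℝ) + 1)) Filter.atTop (nhds 0) := by
    apply Filter.Tendsto.div_atTop tendsto_const_nhds
    exact Filter.tendsto_atTop_add_const_right _ _ tendsto_natCast_atTop_atTop
  have h1 : Filter.Tendsto (fun n : ℕ => (a + n) / ((n : ℝ) + 1)) Filter.atTop (nhds 1) := by
    have : ∀ n : ℕ, (a + n) / ((n : ℝ) + 1) = 1 + (a - 1) / ((n : ℝ) + 1) := by
      intro n
      have hn : ((n : ℝ) + 1) ≠ 0 := by positivity
      field_simp
      ring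
    simp_rw [this]
    simpa using Filter.Tendsto.const_add 1 h0
  have h2 := (continuous_abs.tendsto (1:ℝ)).comp h1
  simp only [abs_one] at h2
  refine h2.congr fun n => ?_
  simp only [Function.comp_apply, abs_div]
  rw [abs_of_pos (by positivity : (0:ℝ) < (n:ℝ) + 1)]

/-- Master summability lemma via ratio test. -/
lemma summable_master (a b r : ℝ) (hr : |r| < 1) :
    Summable (fun n : ℕ =>
      |pochR a n| * |pochR b n| / ((n.factorial : ℝ) * n.factorial) * ((n : ℝ) + 1) * |r| ^ n) := by
  set f : ℕ → ℝ := fun n =>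
    |pochR a n| * |pochR b n| / ((n.factorial : ℝ) * n.factorial) * ((n : ℝ) + 1) * |r| ^ n with hf
  set q : ℕ → ℝ := fun n =>
    (|a + n| / ((n : ℝ) + 1)) * (|b + n| / ((n : ℝ) + 1)) * ((((n:ℕ)+1 : ℕ) : ℝ) + 1) / (((n:ℕ):ℝ) + 1) * |r| with hq
  have hfpos : ∀ n, 0 ≤ f n := by
    intro n
    have : (0:ℝ) < (n.factorial : ℝ) * n.factorial := by positivity
    positivity
  have hkey : ∀ n : ℕ, f (n + 1) = q n * f n := by
    intro n
    have hfac : ((n.factorial : ℝ)) ≠ 0 := by positivity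
    have hn1 : ((n : ℝ) + 1) ≠ 0 := by positivity
    simp only [hf, hq, pochR_succ, Nat.factorial_succ, abs_mul, pow_succ]
    push_cast
    field_simp
  have hqten : Filter.Tendsto q Filter.atTop (nhds |r|) := by
    have h3 : Filter.Tendsto (fun n : ℕ => ((((n:ℕ)+1 : ℕ) : ℝ) + 1) / (((n:ℕ):ℝ) + 1))
        Filter.atTop (nhds 1) := by
      have := tendsto_abs_ratio 2
      refine this.congr fun n => ?_
      push_cast
      rw [abs_of_pos (by positivity : (0:ℝ) < 2 + n)]
      ring_nf
    have := ((tendsto_abs_ratio a).mul (tendsto_abs_ratio b)).mul h3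
    have h4 := this.mul_const |r|
    simp only [one_mul, mul_one] at h4
    refine h4.congr fun n => ?_
    simp only [hq]
    ring
  have hl : |r| < (1 + |r|) / 2 := by linarith
  have hl1 : (1 + |r|) / 2 < 1 := by linarith
  apply summable_of_ratio_norm_eventually_le hl1
  filter_upwards [hqten.eventually_lt_const hl] with n hn
  rw [Real.norm_eq_abs, Real.norm_eq_abs, abs_of_nonneg (hfpos _), abs_of_nonneg (hfpos _), hkey]
  exact mul_le_mul_of_nonneg_right (le_of_lt hn) (hfpos n)

/-- Summability of a 2F1-type series. -/
lemma summable_poch2 (a b r : ℝ) (hr : |r| < 1) :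
    Summable (fun n : ℕ =>
      pochR a n * pochR b n / ((n.factorial : ℝ) * n.factorial) * r ^ n) := by
  apply Summable.of_norm
  refine Summable.of_nonneg_of_le (fun n => norm_nonneg _) (fun n => ?_) (summable_master a b r hr)
  rw [Real.norm_eq_abs, abs_mul, abs_div, abs_mul, abs_pow]
  have h1 : |(n.factorial : ℝ) * (n.factorial : ℝ)| = (n.factorial : ℝ) * n.factorial :=
    abs_of_nonneg (by positivity)
  rw [h1]
  have hA : (0:ℝ) ≤ |pochR a n| * |pochR b n| / ((n.factorial : ℝ) * n.factorial) := by
    positivity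
  have hrp : (0:ℝ) ≤ |r| ^ n := by positivity
  nlinarith [mul_nonneg (mul_nonneg hA (by positivity : (0:ℝ) ≤ (n:ℝ))) hrp]

/-- Summability of binomial series coefficients. -/
lemma summable_binom (a r : ℝ) (hr : |r| < 1) :
    Summable (fun n : ℕ => pochR a n / (n.factorial : ℝ) * r ^ n) := by
  refine (summable_poch2 a 1 r hr).congr fun n => ?_
  rw [pochR_one]
  have h : ((n.factorial : ℝ)) ≠ 0 := by positivity
  field_simp

lemma abs_c_eq (a : ℝ) (n : ℕ) :
    |pochR a n| * |pochR (1:ℝ) n| / ((n.factorial : ℝ) * n.factorial)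
      = |pochR a n / (n.factorial : ℝ)| := by
  rw [pochR_one, abs_div, abs_of_nonneg (by positivity : (0:ℝ) ≤ (n.factorial:ℝ))]
  have h : ((n.factorial : ℝ)) ≠ 0 := by positivity
  field_simp

/-- The binomial series: for `|x| < 1`, `∑ (a)_n/n! xⁿ = (1-x)^(-a)`. -/
lemma hasSum_binomial (a : ℝ) {x : ℝ} (hx : |x| < 1) :
    HasSum (fun n : ℕ => pochR a n / (n.factorial : ℝ) * x ^ n) ((1 - x) ^ (-a)) := by
  set c : ℕ → ℝ := fun n => pochR a n / (n.factorial : ℝ) with hc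
  -- derivative-bound series summability
  have hder : ∀ r : ℝ, 0 < r → r < 1 →
      Summable (fun n : ℕ => |c n| * (((n : ℝ) + 1) * r ^ (n - 1))) := by
    intro r hr0 hr1
    have hM : Summable (fun n : ℕ => |c n| * (((n:ℝ)+1) * r ^ n)) := by
      refine (summable_master a 1 r (by rw [abs_of_pos hr0]; exact hr1)).congr fun n => ?_
      rw [abs_c_eq, abs_of_pos hr0]; ring
    refine Summable.of_nonneg_of_le (fun n => by positivity) (fun n => ?_) (hM.mul_left r⁻¹)
    have hpow : r ^ (n - 1) ≤ r⁻¹ * r ^ n := by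
      rcases n with _ | m
      · simp only [Nat.zero_sub, pow_zero, mul_one]
        rw [one_le_inv_iff₀]
        exact ⟨hr0, le_of_lt hr1⟩
      · rw [Nat.succ_sub_one, pow_succ, show r⁻¹ * (r ^ m * r) = r ^ m * (r⁻¹ * r) by ring,
          inv_mul_cancel₀ (ne_of_gt hr0), mul_one]
    calc |c n| * (((n:ℝ)+1) * r ^ (n-1)) ≤ |c n| * (((n:ℝ)+1) * (r⁻¹ * r ^ n)) := by
          have h2 : (0:ℝ) ≤ |c n| * ((n:ℝ)+1) := by positivity
          nlinarith [mul_le_mul_of_nonneg_left hpow h2]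
      _ = r⁻¹ * (|c n| * (((n:ℝ)+1) * r ^ n)) := by ring
  -- pointwise bound for derivative terms
  have hbound : ∀ r : ℝ, 0 < r → ∀ z : ℝ, |z| ≤ r → ∀ n : ℕ,
      ‖c n * ((n:ℝ) * z ^ (n-1))‖ ≤ |c n| * (((n:ℝ)+1) * r ^ (n-1)) := by
    intro r hr0 z hz n
    rw [Real.norm_eq_abs, abs_mul, abs_mul, abs_pow]
    have h1 : |z| ^ (n-1) ≤ r ^ (n-1) := pow_le_pow_left₀ (abs_nonneg z) hz _
    have h2 : |((n:ℝ))| = (n:ℝ) := abs_of_nonneg (by positivity)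
    rw [h2]
    have h4 : (0:ℝ) ≤ |c n| := abs_nonneg _
    nlinarith [pow_nonneg (abs_nonneg z) (n-1), pow_nonneg (le_of_lt hr0) (n-1),
      mul_le_mul_of_nonneg_left h1 (mul_nonneg h4 (by positivity : (0:ℝ) ≤ (n:ℝ)))]
  set F : ℝ → ℝ := fun z => ∑' n : ℕ, c n * z ^ n with hF
  -- derivative of F
  have hFderiv : ∀ y : ℝ, |y| < 1 →
      HasDerivAt F (∑' n : ℕ, c n * ((n : ℝ) * y ^ (n - 1))) y := by
    intro y hy
    set r : ℝ := (1 + |y|) / 2 with hr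
    have hy0 : 0 ≤ |y| := abs_nonneg y
    have hr0 : 0 < r := by rw [hr]; linarith
    have hr1 : r < 1 := by rw [hr]; linarith
    have hyr : |y| < r := by rw [hr]; linarith
    have hu := hder r hr0 hr1
    have hy' := abs_lt.mp hyr
    refine hasDerivAt_tsum_of_isPreconnected hu (isOpen_Ioo (a := -r) (b := r))
      (convex_Ioo _ _).isPreconnected (fun n z _ => (hasDerivAt_pow n z).const_mul (c n))
      (fun n z hz => hbound r hr0 z (le_of_lt (abs_lt.mpr ⟨hz.1, hz.2⟩)) n)
      (show (0:ℝ) ∈ Set.Ioo (-r) r from Set.mem_Ioo.mpr ⟨by linarith, by linarith⟩) ?_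
      (Set.mem_Ioo.mpr ⟨hy'.1, hy'.2⟩)
    · refine summable_of_ne_finset_zero (s := {0}) fun n hn => ?_
      have hn0 : n ≠ 0 := by simpa using hn
      rcases Nat.exists_eq_succ_of_ne_zero hn0 with ⟨m, rfl⟩
      simp [zero_pow (Nat.succ_ne_zero m)]
  -- the ODE : (1 - y) F'(y) = a F(y)
  have hODE : ∀ y : ℝ, |y| < 1 →
      (1 - y) * (∑' n : ℕ, c n * ((n : ℝ) * y ^ (n - 1))) = a * F y := by
    intro y hy
    set r : ℝ := (1 + |y|) / 2 with hr
    have hy0 : 0 ≤ |y| := abs_nonneg y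
    have hr0 : 0 < r := by rw [hr]; linarith
    have hr1 : r < 1 := by rw [hr]; linarith
    have hyr : |y| ≤ r := by rw [hr]; linarith
    have Sd : Summable (fun n : ℕ => c n * ((n:ℝ) * y ^ (n-1))) :=
      Summable.of_norm (Summable.of_nonneg_of_le (fun n => norm_nonneg _)
        (fun n => hbound r hr0 y hyr n) (hder r hr0 hr1))
    have Sshift : Summable (fun n : ℕ => c (n+1) * (((n:ℝ)+1) * y ^ n)) := by
      have := (summable_nat_add_iff 1).mpr Sd
      refine this.congr fun n => ?_
      push_cast
      norm_num
    have Sw : Summable (fun n : ℕ => c n * ((n:ℝ) * y ^ n)) := by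
      refine (Sd.mul_left y).congr fun n => ?_
      rcases n with _ | m
      · simp
      · rw [Nat.succ_sub_one, pow_succ]
        push_cast
        ring
    have hshift : (∑' n : ℕ, c n * ((n:ℝ) * y ^ (n-1)))
        = ∑' n : ℕ, c (n+1) * (((n:ℝ)+1) * y ^ n) := by
      rw [Summable.tsum_eq_zero_add Sd]
      simp only [Nat.cast_zero, zero_mul, mul_zero, zero_add, Nat.succ_sub_one]
      apply tsum_congr
      intro n
      push_cast
      ring
    have hyD : y * (∑' n : ℕ, c n * ((n:ℝ) * y ^ (n-1)))
        = ∑' n : ℕ, c n * ((n:ℝ) * y ^ n) := by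
      rw [← tsum_mul_left]
      apply tsum_congr
      intro n
      rcases n with _ | m
      · simp
      · rw [Nat.succ_sub_one, pow_succ]
        push_cast
        ring
    have hcoef : ∀ n : ℕ, c (n+1) * ((n:ℝ)+1) = c n * (a + n) := by
      intro n
      rw [hc]
      simp only
      rw [pochR_succ, Nat.factorial_succ]
      have h1 : ((n.factorial : ℝ)) ≠ 0 := by positivity
      have h2 : ((n:ℝ) + 1) ≠ 0 := by positivity
      push_cast
      field_simp
    have : (1 - y) * (∑' n : ℕ, c n * ((n:ℝ) * y ^ (n-1)))
        = (∑' n : ℕ, c (n+1) * (((n:ℝ)+1) * y ^ n)) - ∑' n : ℕ, c n * ((n:ℝ) * y ^ n) := by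
      rw [sub_mul, one_mul, hyD, hshift]
    rw [this, ← Summable.tsum_sub Sshift Sw]
    rw [hF]
    simp only
    rw [← tsum_mul_left]
    apply tsum_congr
    intro n
    linear_combination y ^ n * hcoef n
  -- constancy of G = F * (1-·)^a on (-1,1)
  set G : ℝ → ℝ := fun z => F z * (1 - z) ^ a with hG
  have hGderiv : ∀ z ∈ Set.Ioo (-1:ℝ) 1, HasDerivAt G 0 z := by
    intro z hz
    have hz1 : (0:ℝ) < 1 - z := by have := hz.2; linarith
    have hzabs : |z| < 1 := abs_lt.mpr ⟨hz.1, hz.2⟩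
    have h1 := hFderiv z hzabs
    have h2 : HasDerivAt (fun w : ℝ => (1 - w) ^ a) (-1 * a * (1 - z) ^ (a - 1)) z := by
      have hbase : HasDerivAt (fun w : ℝ => 1 - w) (-1) z := by
        simpa using (hasDerivAt_id z).const_sub 1
      exact hbase.rpow_const (Or.inl (ne_of_gt hz1))
    have h3 := h1.mul h2
    have key : (1 - z) ^ a = (1 - z) * (1 - z) ^ (a - 1) := by
      have := Real.rpow_add hz1 1 (a - 1)
      rw [show (1:ℝ) + (a - 1) = a by ring] at this
      rw [this, Real.rpow_one]
    have hzero : (∑' n : ℕ, c n * ((n:ℝ) * z ^ (n-1))) * (1 - z) ^ a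
        + F z * (-1 * a * (1 - z) ^ (a - 1)) = 0 := by
      rw [key]
      linear_combination (1 - z) ^ (a - 1) * hODE z hzabs
    rw [hG]
    exact h3.congr_deriv hzero
  have hGconst : G x = G 0 := by
    have hx' : x ∈ Set.Ioo (-1:ℝ) 1 := Set.mem_Ioo.mpr ⟨(abs_lt.mp hx).1, (abs_lt.mp hx).2⟩
    have h0' : (0:ℝ) ∈ Set.Ioo (-1:ℝ) 1 := by norm_num
    refine (convex_Ioo (-1:ℝ) 1).is_const_of_fderivWithin_eq_zero
      (fun z hz => ((hGderiv z hz).differentiableAt).differentiableWithinAt)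
      (fun z hz => ?_) hx' h0'
    rw [fderivWithin_of_isOpen isOpen_Ioo hz, ((hGderiv z hz).hasFDerivAt).fderiv]
    show (1 : ℝ →L[ℝ] ℝ).smulRight 0 = 0
    ext
    simp
  have hF0 : F 0 = 1 := by
    rw [hF]
    simp only
    rw [tsum_eq_single 0 (fun n hn => by
      rcases Nat.exists_eq_succ_of_ne_zero hn with ⟨m, rfl⟩
      simp [pow_succ])]
    simp [hc, pochR_zero]
  have hG0 : G 0 = 1 := by
    rw [hG]; simp only [sub_zero, Real.one_rpow, mul_one, hF0]
  have hx1 : (0:ℝ) < 1 - x := by have := (abs_lt.mp hx).2; linarith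
  have hBne : (1 - x) ^ a ≠ 0 := ne_of_gt (Real.rpow_pos_of_pos hx1 a)
  have hFx : F x = (1 - x) ^ (-a) := by
    have h1 : F x * (1 - x) ^ a = 1 := by
      rw [hG0] at hGconst
      exact hGconst
    rw [Real.rpow_neg (le_of_lt hx1)]
    field_simp at h1 ⊢
    linarith
  have hs := (summable_binom a x hx).hasSum
  have : (∑' n : ℕ, pochR a n / (n.factorial : ℝ) * x ^ n) = (1 - x) ^ (-a) := hFx
  rwa [this] at hs

lemma cast_beta_integrand (u v z : ℝ) (hz0 : 0 ≤ z) (hz1 : z ≤ 1) :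
    (z:ℂ) ^ ((u:ℂ) - 1) * ((1:ℂ) - (z:ℂ)) ^ ((v:ℂ) - 1)
      = ((z ^ (u - 1) * (1 - z) ^ (v - 1) : ℝ) : ℂ) := by
  have h1 : ((u:ℂ) - 1) = ((u - 1 : ℝ) : ℂ) := by push_cast; ring
  have h2 : ((1:ℂ) - (z:ℂ)) = ((1 - z : ℝ) : ℂ) := by push_cast; ring
  have h3 : ((v:ℂ) - 1) = ((v - 1 : ℝ) : ℂ) := by push_cast; ring
  rw [h1, h2, h3, ← Complex.ofReal_cpow hz0, ← Complex.ofReal_cpow (by linarith : (0:ℝ) ≤ 1 - z)]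
  push_cast
  ring

/-- Real Beta integral on `Ioo 0 1`: value. -/
lemma integral_beta_Ioo (u v : ℝ) (hu : 0 < u) (hv : 0 < v) :
    ∫ z in Set.Ioo (0:ℝ) 1, z ^ (u - 1) * (1 - z) ^ (v - 1)
      = Real.Gamma u * Real.Gamma v / Real.Gamma (u + v) := by
  have key := Complex.Gamma_mul_Gamma_eq_betaIntegral
    (s := (u:ℂ)) (t := (v:ℂ)) (by simpa using hu) (by simpa using hv)
  have hconv : Complex.betaIntegral (u:ℂ) (v:ℂ)
      = ((∫ z in (0:ℝ)..1, z ^ (u - 1) * (1 - z) ^ (v - 1) : ℝ) : ℂ) := by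
    rw [Complex.betaIntegral]
    rw [← intervalIntegral.integral_ofReal]
    apply intervalIntegral.integral_congr
    intro z hz
    rw [Set.uIcc_of_le (by norm_num : (0:ℝ) ≤ 1)] at hz
    exact cast_beta_integrand u v z hz.1 hz.2
  rw [hconv] at key
  have hG : Real.Gamma (u + v) ≠ 0 := ne_of_gt (Real.Gamma_pos_of_pos (by linarith))
  have key2 : Real.Gamma u * Real.Gamma v
      = Real.Gamma (u + v) * ∫ z in (0:ℝ)..1, z ^ (u - 1) * (1 - z) ^ (v - 1) := by
    rw [← Complex.ofReal_add, Complex.Gamma_ofReal, Complex.Gamma_ofReal,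
      Complex.Gamma_ofReal] at key
    exact_mod_cast key
  rw [intervalIntegral.integral_of_le (by norm_num : (0:ℝ) ≤ 1),
    integral_Ioc_eq_integral_Ioo] at key2
  rw [key2]
  field_simp

/-- Real Beta integrand is integrable on `Ioo 0 1`. -/
lemma integrable_beta_Ioo (u v : ℝ) (hu : 0 < u) (hv : 0 < v) :
    IntegrableOn (fun z : ℝ => z ^ (u - 1) * (1 - z) ^ (v - 1)) (Set.Ioo (0:ℝ) 1) := by
  have hC := Complex.betaIntegral_convergent
    (u := (u:ℂ)) (v := (v:ℂ)) (by simpa using hu) (by simpa using hv)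
  have hC' : IntegrableOn
      (fun z : ℝ => (z:ℂ) ^ ((u:ℂ) - 1) * ((1:ℂ) - z) ^ ((v:ℂ) - 1)) (Set.Ioc (0:ℝ) 1) := by
    rw [← intervalIntegrable_iff_integrableOn_Ioc_of_le (by norm_num : (0:ℝ) ≤ 1)]
    exact hC
  have hC2 : IntegrableOn
      (fun z : ℝ => ((z ^ (u-1) * (1-z) ^ (v-1) : ℝ) : ℂ)) (Set.Ioo (0:ℝ) 1) := by
    refine (hC'.mono_set Set.Ioo_subset_Ioc_self).congr_fun ?_ measurableSet_Ioo
    intro z hz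
    exact cast_beta_integrand u v z (le_of_lt hz.1) (le_of_lt hz.2)
  have hre : IntegrableOn
      (fun z : ℝ => (((z ^ (u - 1) * (1 - z) ^ (v - 1) : ℝ) : ℂ)).re) (Set.Ioo (0:ℝ) 1) := hC2.re
  refine hre.congr_fun ?_ measurableSet_Ioo
  intro z _
  simp

lemma map_Ioo_eq_Ioi :
    (fun u : ℝ => u / (1 - u)) '' Set.Ioo (0:ℝ) 1 = Set.Ioi (0:ℝ) := by
  ext y
  constructor
  · rintro ⟨u, hu, rfl⟩
    have h1 : 0 < 1 - u := by linarith [hu.2]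
    exact div_pos hu.1 h1
  · intro hy
    have hy' : (0:ℝ) < y := hy
    refine ⟨y / (1 + y), ⟨by positivity, ?_⟩, ?_⟩
    · rw [div_lt_one (by linarith)]; linarith
    · have h1 : (1:ℝ) + y ≠ 0 := by positivity
      field_simp
      ring

lemma hasDeriv_map (u : ℝ) (hu : u ∈ Set.Ioo (0:ℝ) 1) :
    HasDerivAt (fun w : ℝ => w / (1 - w)) (((1 - u) ^ 2)⁻¹) u := by
  have h1 : (1:ℝ) - u ≠ 0 := ne_of_gt (by linarith [hu.2])
  have hbase : HasDerivAt (fun w : ℝ => 1 - w) (-1) u := by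
    simpa using (hasDerivAt_id u).const_sub 1
  have hinv := hbase.inv h1
  have hmul := (hasDerivAt_id u).mul hinv
  simp only [id_eq, one_mul] at hmul
  have heq : (fun w : ℝ => w / (1 - w)) = fun w : ℝ => w * (1 - w)⁻¹ := by
    funext w; rw [div_eq_mul_inv]
  rw [heq]
  refine hmul.congr_deriv ?_
  simp only [Pi.inv_apply]
  field_simp
  ring

lemma injOn_map : Set.InjOn (fun u : ℝ => u / (1 - u)) (Set.Ioo (0:ℝ) 1) := by
  intro a ha b hb h
  have ha1 : (1:ℝ) - a ≠ 0 := ne_of_gt (by linarith [ha.2])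
  have hb1 : (1:ℝ) - b ≠ 0 := ne_of_gt (by linarith [hb.2])
  field_simp at h
  linarith [h]

lemma beta_subst_eq (b c u : ℝ) (hu : u ∈ Set.Ioo (0:ℝ) 1) :
    |((1 - u) ^ 2)⁻¹| • ((u / (1 - u)) ^ (b - 1) * (1 + u / (1 - u)) ^ (-(b + c)))
      = u ^ (b - 1) * (1 - u) ^ (c - 1) := by
  have hu0 : 0 < u := hu.1
  have hu1 : 0 < 1 - u := by linarith [hu.2]
  have h1u : 1 + u / (1 - u) = (1 - u)⁻¹ := by field_simp; ring
  have habs : |((1 - u) ^ 2)⁻¹| = ((1 - u) ^ 2)⁻¹ := abs_of_pos (by positivity)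
  rw [smul_eq_mul, habs, h1u, Real.div_rpow (le_of_lt hu0) (le_of_lt hu1)]
  have e1 : ((1 - u) ^ 2)⁻¹ = (1 - u) ^ (-(2:ℝ)) := by
    rw [show ((2:ℝ)) = ((2:ℕ):ℝ) by norm_num, Real.rpow_neg (le_of_lt hu1),
      Real.rpow_natCast]
  have e2 : ((1 - u)⁻¹) ^ (-(b+c)) = (1 - u) ^ (b + c) := by
    rw [Real.inv_rpow (le_of_lt hu1), Real.rpow_neg (le_of_lt hu1), inv_inv]
  have e3 : u ^ (b-1) / (1-u) ^ (b-1) = u ^ (b-1) * (1-u) ^ (-(b-1)) := by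
    rw [Real.rpow_neg (le_of_lt hu1), div_eq_mul_inv]
  have e4 : (1-u) ^ (-(2:ℝ)) * ((1-u) ^ (-(b-1)) * (1-u) ^ (b+c)) = (1-u) ^ (c-1) := by
    rw [← Real.rpow_add hu1, ← Real.rpow_add hu1]
    congr 1
    ring
  rw [e1, e2, e3]
  calc (1-u) ^ (-(2:ℝ)) * (u ^ (b-1) * (1-u) ^ (-(b-1)) * (1-u) ^ (b+c))
      = u ^ (b-1) * ((1-u) ^ (-(2:ℝ)) * ((1-u) ^ (-(b-1)) * (1-u) ^ (b+c))) := by ring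
    _ = u ^ (b-1) * (1-u) ^ (c-1) := by rw [e4]

/-- Beta integral on `Ioi 0`: the value. -/
lemma integral_beta_Ioi (b c : ℝ) (hb : 0 < b) (hc : 0 < c) :
    ∫ y in Set.Ioi (0:ℝ), y ^ (b - 1) * (1 + y) ^ (-(b + c))
      = Real.Gamma b * Real.Gamma c / Real.Gamma (b + c) := by
  have hchg := integral_image_eq_integral_abs_deriv_smul (measurableSet_Ioo (a := (0:ℝ)) (b := 1))
    (fun u hu => (hasDeriv_map u hu).hasDerivWithinAt) injOn_map
    (fun y : ℝ => y ^ (b - 1) * (1 + y) ^ (-(b + c)))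
  rw [map_Ioo_eq_Ioi] at hchg
  rw [hchg, ← integral_beta_Ioo b c hb hc]
  apply setIntegral_congr_fun measurableSet_Ioo
  intro u hu
  exact beta_subst_eq b c u hu

/-- Beta integrand on `Ioi 0` is integrable. -/
lemma integrable_beta_Ioi (b c : ℝ) (hb : 0 < b) (hc : 0 < c) :
    IntegrableOn (fun y : ℝ => y ^ (b - 1) * (1 + y) ^ (-(b + c))) (Set.Ioi (0:ℝ)) := by
  have hchg := integrableOn_image_iff_integrableOn_abs_deriv_smul
    (measurableSet_Ioo (a := (0:ℝ)) (b := 1))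
    (fun u hu => (hasDeriv_map u hu).hasDerivWithinAt) injOn_map
    (fun y : ℝ => y ^ (b - 1) * (1 + y) ^ (-(b + c)))
  rw [map_Ioo_eq_Ioi] at hchg
  rw [hchg]
  refine (integrable_beta_Ioo b c hb hc).congr_fun ?_ measurableSet_Ioo
  intro u hu
  exact (beta_subst_eq b c u hu).symm

theorem stmt7 (p s t : ℝ) (hp0 : 0 < p) (hp1 : p < 1) (hs0 : 0 < s) (hs1 : s < 1)
    (ht0 : 0 < t) (ht1 : t < 1) :
    ∫ y in Set.Ioi (0:ℝ), y ^ (s - 1) * (1 + y) ^ (-p) * (t + y) ^ (p - 1)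
      = π / Real.sin (π * s) * hyp2F1 (1 - p) (1 - s) 1 (1 - t) := by
  set a : ℝ := 1 - p with ha
  set x : ℝ := 1 - t with hx
  have ha0 : 0 < a := by rw [ha]; linarith
  have hx0 : 0 < x := by rw [hx]; linarith
  have hx1 : x < 1 := by rw [hx]; linarith
  have hxabs : |x| < 1 := abs_lt.mpr ⟨by linarith, hx1⟩
  set K : ℕ → ℝ := fun n => pochR a n / (n.factorial : ℝ) * x ^ n with hK
  set f : ℕ → ℝ → ℝ :=
    fun n y => K n * (y ^ (s - 1) * (1 + y) ^ (-((n:ℝ) + 1))) with hf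
  -- pointwise expansion
  have hsum : ∀ y ∈ Set.Ioi (0:ℝ),
      HasSum (fun n => f n y) (y ^ (s - 1) * (1 + y) ^ (-p) * (t + y) ^ (p - 1)) := by
    intro y hy
    have hy0 : (0:ℝ) < y := hy
    have h1y : (0:ℝ) < 1 + y := by linarith
    have hty : (0:ℝ) < t + y := by linarith
    set z : ℝ := x / (1 + y) with hz
    have hz0 : 0 < z := div_pos hx0 h1y
    have hz1 : z < 1 := by
      rw [hz, div_lt_one h1y]; linarith
    have hbin := hasSum_binomial a (x := z) (abs_lt.mpr ⟨by linarith, hz1⟩)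
    set M : ℝ := y ^ (s - 1) / (1 + y) with hM
    have h2 := hbin.mul_left M
    have hterm : (fun n => M * (pochR a n / (n.factorial : ℝ) * z ^ n)) = fun n => f n y := by
      funext n
      have hpow : (1 + y) ^ (-((n:ℝ) + 1)) = ((1 + y) * (1 + y) ^ n)⁻¹ := by
        rw [Real.rpow_neg (le_of_lt h1y), Real.rpow_add h1y, Real.rpow_one,
          Real.rpow_natCast]
        ring
      rw [hf]
      simp only
      rw [hpow, hM, hz, div_pow, mul_inv]
      ring
    have hval : M * (1 - z) ^ (-a) = y ^ (s - 1) * (1 + y) ^ (-p) * (t + y) ^ (p - 1) := by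
      have h1z : 1 - z = (t + y) / (1 + y) := by
        rw [hz, hx]; field_simp; ring
      have hna : -a = p - 1 := by rw [ha]; ring
      rw [h1z, hna, Real.div_rpow (le_of_lt hty) (le_of_lt h1y)]
      have hcomb : (1 + y) * (1 + y) ^ (p - 1) = (1 + y) ^ p := by
        have := Real.rpow_add h1y 1 (p - 1)
        rw [show (1:ℝ) + (p - 1) = p by ring] at this
        rw [this, Real.rpow_one]
      have hneg : (1 + y) ^ (-p) = ((1 + y) ^ p)⁻¹ := Real.rpow_neg (le_of_lt h1y) p
      rw [hM, hneg, ← hcomb]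
      have h1 : ((1:ℝ) + y) ≠ 0 := ne_of_gt h1y
      have h3 : (1 + y) ^ (p - 1) ≠ 0 := ne_of_gt (Real.rpow_pos_of_pos h1y _)
      field_simp
    rw [hterm, hval] at h2
    exact h2
  -- beta values
  have hcpos : ∀ n : ℕ, (0:ℝ) < (n:ℝ) + 1 - s := by
    intro n
    have : (0:ℝ) ≤ (n:ℝ) := Nat.cast_nonneg n
    linarith
  have hbeta : ∀ n : ℕ, ∫ y in Set.Ioi (0:ℝ), y ^ (s - 1) * (1 + y) ^ (-((n:ℝ) + 1))
      = Real.Gamma s * Real.Gamma ((n:ℝ) + 1 - s) / Real.Gamma ((n:ℝ) + 1) := by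
    intro n
    have h := integral_beta_Ioi s ((n:ℝ) + 1 - s) hs0 (hcpos n)
    rw [show s + ((n:ℝ) + 1 - s) = (n:ℝ) + 1 by ring] at h
    exact h
  have hint : ∀ n : ℕ, IntegrableOn
      (fun y : ℝ => y ^ (s - 1) * (1 + y) ^ (-((n:ℝ) + 1))) (Set.Ioi (0:ℝ)) := by
    intro n
    have h := integrable_beta_Ioi s ((n:ℝ) + 1 - s) hs0 (hcpos n)
    rw [show s + ((n:ℝ) + 1 - s) = (n:ℝ) + 1 by ring] at h
    exact h
  have hKpos : ∀ n : ℕ, 0 < K n := by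
    intro n
    rw [hK]
    have := pochR_pos ha0 n
    positivity
  -- the value of each integral
  have hV : ∀ n : ℕ, ∫ y in Set.Ioi (0:ℝ), f n y
      = Real.Gamma s * Real.Gamma (1 - s)
        * (pochR a n * pochR (1 - s) n / ((n.factorial : ℝ) * n.factorial) * x ^ n) := by
    intro n
    rw [hf]
    simp only
    rw [MeasureTheory.integral_const_mul, hbeta n]
    have hg1 : Real.Gamma ((n:ℝ) + 1 - s) = pochR (1 - s) n * Real.Gamma (1 - s) := by
      rw [show (n:ℝ) + 1 - s = (1 - s) + n by ring]
      exact Gamma_pochR (by linarith) n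
    have hg2 : Real.Gamma ((n:ℝ) + 1) = (n.factorial : ℝ) := by
      exact_mod_cast Real.Gamma_nat_eq_factorial n
    rw [hg1, hg2, hK]
    have h1 : ((n.factorial : ℝ)) ≠ 0 := by positivity
    field_simp
  -- summability of the values
  have hVsum : Summable (fun n : ℕ => ∫ y in Set.Ioi (0:ℝ), f n y) := by
    refine ((summable_poch2 a (1 - s) x hxabs).mul_left
      (Real.Gamma s * Real.Gamma (1 - s))).congr fun n => (hV n).symm
  -- nonnegativity of values
  have hVnn : ∀ n : ℕ, 0 ≤ ∫ y in Set.Ioi (0:ℝ), f n y := by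
    intro n
    rw [hV n]
    have h1 := Real.Gamma_pos_of_pos hs0
    have h2 := Real.Gamma_pos_of_pos (by linarith : (0:ℝ) < 1 - s)
    have h3 := pochR_pos ha0 n
    have h4 := pochR_pos (by linarith : (0:ℝ) < 1 - s) n
    positivity
  -- measurability
  have hmeas : ∀ n : ℕ, AEStronglyMeasurable (f n) (volume.restrict (Set.Ioi (0:ℝ))) := by
    intro n
    refine ContinuousOn.aestronglyMeasurable ?_ measurableSet_Ioi
    rw [hf]
    simp only
    apply ContinuousOn.mul continuousOn_const
    apply ContinuousOn.mul
    · exact continuousOn_id.rpow_const fun y hy => Or.inl (ne_of_gt hy)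
    · refine (continuousOn_const.add continuousOn_id).rpow_const fun y hy => Or.inl ?_
      have h5 : (0:ℝ) < y := hy
      show (1:ℝ) + y ≠ 0
      positivity
  -- integrability of each term
  have hInt : ∀ n : ℕ, Integrable (f n) (volume.restrict (Set.Ioi (0:ℝ))) := by
    intro n
    rw [hf]
    simp only
    exact (hint n).const_mul (K n)
  -- nonnegativity a.e.
  have hfnn : ∀ n : ℕ, 0 ≤ᵐ[volume.restrict (Set.Ioi (0:ℝ))] f n := by
    intro n
    rw [Filter.EventuallyLE, ae_restrict_iff' measurableSet_Ioi]
    apply Filter.Eventually.of_forall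
    intro y hy
    have hy0 : (0:ℝ) < y := hy
    rw [hf]
    simp only [Pi.zero_apply]
    have h1 : (0:ℝ) ≤ y ^ (s - 1) := Real.rpow_nonneg (le_of_lt hy0) _
    have h2 : (0:ℝ) ≤ (1 + y) ^ (-((n:ℝ) + 1)) := Real.rpow_nonneg (by linarith) _
    have h3 := hKpos n
    positivity
  -- lintegral bound
  have hlint : ∑' n : ℕ, ∫⁻ y, ‖f n y‖₊ ∂(volume.restrict (Set.Ioi (0:ℝ))) ≠ ⊤ := by
    have heq : ∀ n : ℕ, ∫⁻ y, (‖f n y‖₊ : ENNReal) ∂(volume.restrict (Set.Ioi (0:ℝ)))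
        = ENNReal.ofReal (∫ y in Set.Ioi (0:ℝ), f n y) := by
      intro n
      rw [MeasureTheory.ofReal_integral_eq_lintegral_ofReal (hInt n) (hfnn n)]
      apply lintegral_congr_ae
      filter_upwards [hfnn n] with y hy
      exact Real.enorm_eq_ofReal hy
    rw [tsum_congr heq, ← ENNReal.ofReal_tsum_of_nonneg hVnn hVsum]
    exact ENNReal.ofReal_ne_top
  -- main computation
  calc ∫ y in Set.Ioi (0:ℝ), y ^ (s - 1) * (1 + y) ^ (-p) * (t + y) ^ (p - 1)
      = ∫ y in Set.Ioi (0:ℝ), ∑' n : ℕ, f n y := by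
        apply setIntegral_congr_fun measurableSet_Ioi
        intro y hy
        exact ((hsum y hy).tsum_eq).symm
    _ = ∑' n : ℕ, ∫ y in Set.Ioi (0:ℝ), f n y := MeasureTheory.integral_tsum hmeas hlint
    _ = ∑' n : ℕ, Real.Gamma s * Real.Gamma (1 - s)
          * (pochR a n * pochR (1 - s) n / ((n.factorial : ℝ) * n.factorial) * x ^ n) :=
        tsum_congr hV
    _ = Real.Gamma s * Real.Gamma (1 - s)
          * ∑' n : ℕ, pochR a n * pochR (1 - s) n / ((n.factorial : ℝ) * n.factorial) * x ^ n :=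
        tsum_mul_left
    _ = π / Real.sin (π * s) * hyp2F1 a (1 - s) 1 x := by
        rw [Real.Gamma_mul_Gamma_one_sub s]
        unfold hyp2F1
        congr 1
        apply tsum_congr
        intro n
        rw [pochR_one]
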